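/- Suppose λ is an integer partition with k ≥ 3 parts that are not all equal. Then |λ^{⊥B}| is at most the sum of the four largest binomial coefficients C(k−2, j) over j ∈ {0, 1, …, k−2}. -/

import Mathlib

open scoped BigOperators Classical

namespace P2834

/-- The ±1 value associated to a Boolean. -/
def signVal (b : Bool) : ℤ := if b then 1 else -1

/-- The Bernoulli ±1 matrix built from a Boolean matrix. -/
def bmat {n : ℕ} (B : Fin n → Fin n → Bool) : Matrix (Fin n) (Fin n) ℤ :=
  fun i j => signVal (B i j)

/-- Probability of an event under the uniform distribution on `n × n` ±1 matrices. -/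
noncomputable def Pr (n : ℕ) (E : Matrix (Fin n) (Fin n) ℤ → Prop) : ℝ :=
  (Finset.filter (fun B : Fin n → Fin n → Bool => E (bmat B)) Finset.univ).card / 2 ^ (n * n)

/-- Expectation of a real-valued function of a uniformly random `n × n` ±1 matrix. -/
noncomputable def Ex (n : ℕ) (f : Matrix (Fin n) (Fin n) ℤ → ℝ) : ℝ :=
  (∑ B : Fin n → Fin n → Bool, f (bmat B)) / 2 ^ (n * n)

/-- `lam : Fin k → ℤ` is an integer partition with `k` parts:
nonincreasing, all parts at least 1. -/
def IsPartition {k : ℕ} (lam : Fin k → ℤ) : Prop :=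
  (∀ i j : Fin k, i ≤ j → lam j ≤ lam i) ∧ ∀ i, 1 ≤ lam i

/-- The Bernoulli orthogonal complement of `v`: sign vectors (encoded as Boolean
vectors, `true ↦ +1`, `false ↦ -1`) orthogonal to `v`. -/
def perpB {k : ℕ} (v : Fin k → ℤ) : Finset (Fin k → Bool) :=
  Finset.filter (fun x => ∑ i, v i * signVal (x i) = 0) Finset.univ

/-- `r_λ := |λ^{⊥B}| / 2^k`. -/
def rVal {k : ℕ} (lam : Fin k → ℤ) : ℚ := (perpB lam).card / 2 ^ k

/-- `V_λ`: all vectors obtained by permuting the parts of `λ` and attaching ± signs,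
with the first coordinate positive. -/
def Vlam {k : ℕ} (lam : Fin k → ℤ) : Set (Fin k → ℤ) :=
  {v | (∃ (σ : Equiv.Perm (Fin k)) (ε : Fin k → ℤ),
          (∀ i, ε i = 1 ∨ ε i = -1) ∧ ∀ i, v i = ε i * lam (σ i)) ∧
        ∀ h : 0 < k, 0 < v ⟨0, h⟩}

/-- `V_λ^{(n)}`: vectors of length `n` of template `λ`, obtained from elements of
`V_λ` by inserting `n - k` zero coordinates (via an order-preserving coordinate
injection). -/
def VlamN {k : ℕ} (lam : Fin k → ℤ) (n : ℕ) : Set (Fin n → ℤ) :=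
  {w | ∃ (c : Fin k ↪o Fin n) (u : Fin k → ℤ), u ∈ Vlam lam ∧
        (∀ i, w (c i) = u i) ∧ ∀ j, (∀ i, c i ≠ j) → w j = 0}

/-- `μ` reduces to `λ` (`μ ⇒ λ`): there are a `k`-element subset `I` of the `m`
coordinates (given by an order embedding) and `v ∈ V_λ` with
`Proj_I μ^{⊥B} ⊆ v^{⊥B}`.  (When `k = m` the only order embedding is the identity,
recovering the case `μ^{⊥B} ⊆ v^{⊥B}`.) -/
def Reduces {m k : ℕ} (mu : Fin m → ℤ) (lam : Fin k → ℤ) : Prop :=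
  ∃ (I : Fin k ↪o Fin m) (v : Fin k → ℤ), v ∈ Vlam lam ∧
    ∀ x ∈ perpB mu, (fun i => x (I i)) ∈ perpB v

/-- Equivalence of templates: reduction in both directions. -/
def Equivp {m k : ℕ} (mu : Fin m → ℤ) (lam : Fin k → ℤ) : Prop :=
  Reduces mu lam ∧ Reduces lam mu

/-- Strict reduction: `μ ⇒ λ` but not `λ ⇒ μ`. -/
def StrictReduces {m k : ℕ} (mu : Fin m → ℤ) (lam : Fin k → ℤ) : Prop :=
  Reduces mu lam ∧ ¬ Reduces lam mu

/-- Lexicographic comparison of integer vectors. -/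
def lexLE {k : ℕ} (a b : Fin k → ℤ) : Prop :=
  a = b ∨ ∃ i, (∀ j, j < i → a j = b j) ∧ a i < b i

/-- A partition is novel iff it does not strictly reduce to any partition, and it is
lexicographically first among all partitions equivalent to it. -/
def Novel {k : ℕ} (lam : Fin k → ℤ) : Prop :=
  IsPartition lam ∧
  (∀ (m : ℕ) (mu : Fin m → ℤ), IsPartition mu → ¬ StrictReduces lam mu) ∧
  (∀ mu : Fin k → ℤ, IsPartition mu → Equivp lam mu → lexLE lam mu)

/-- The event that `M` has a right null vector of template `λ`. -/
def Rev {k : ℕ} (lam : Fin k → ℤ) (n : ℕ) (M : Matrix (Fin n) (Fin n) ℤ) : Prop :=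
  ∃ v ∈ VlamN lam n, M.mulVec v = 0

/-- The event that `M` has a left null vector of template `λ`. -/
def Lev {k : ℕ} (lam : Fin k → ℤ) (n : ℕ) (M : Matrix (Fin n) (Fin n) ℤ) : Prop :=
  ∃ v ∈ VlamN lam n, Matrix.vecMul v M = 0

/-- `D_λ := R_λ ∪ L_λ`. -/
def Dev {k : ℕ} (lam : Fin k → ℤ) (n : ℕ) (M : Matrix (Fin n) (Fin n) ℤ) : Prop :=
  Rev lam n M ∨ Lev lam n M

/-- The partition `1^k`. -/
def onesP (k : ℕ) : Fin k → ℤ := fun _ => 1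

/-- The partition `2·1^(k-1)`. -/
def twoOnesP (k : ℕ) : Fin k → ℤ := fun i => if i.val = 0 then 2 else 1


/-- The sum of the four largest binomial coefficients `C(m, j)`, `0 ≤ j ≤ m`:
the maximum of `∑_{j ∈ S} C(m,j)` over subsets `S` with at most 4 elements. -/
def sumTop4 (m : ℕ) : ℕ :=
  ((Finset.range (m + 1)).powerset.filter (fun S => S.card ≤ 4)).sup
    (fun S => ∑ j ∈ S, Nat.choose m j)

lemma knap (I : Finset ℕ) (c n : ℕ → ℕ) (r : ℕ)
    (hc : ∀ s ∈ I, 0 < c s) (hn : ∀ s ∈ I, n s ≤ c s)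
    (hsum : ∑ s ∈ I, (n s : ℚ) / c s ≤ r) :
    ∃ S ⊆ I, S.card ≤ r ∧ ∑ s ∈ I, n s ≤ ∑ s ∈ S, c s := by
  by_cases hIr : I.card ≤ r
  · exact ⟨I, Finset.Subset.refl I, hIr, Finset.sum_le_sum hn⟩
  push_neg at hIr
  rcases Nat.eq_zero_or_pos r with hr0 | hrpos
  · refine ⟨∅, Finset.empty_subset I, by simp, ?_⟩
    have hz : ∀ s ∈ I, n s = 0 := by
      intro s hs
      have h1 : ∀ s ∈ I, (0:ℚ) ≤ (n s : ℚ) / c s := fun s hs =>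
        div_nonneg (by positivity) (by positivity)
      have := Finset.sum_eq_zero_iff_of_nonneg h1 |>.1
        (le_antisymm (hsum.trans (by simp [hr0])) (Finset.sum_nonneg h1))
      have h2 := this s hs
      have hcs : (0:ℚ) < c s := by exact_mod_cast hc s hs
      field_simp at h2
      exact_mod_cast h2
    simp [Finset.sum_congr rfl hz]
  -- pick S of card r maximizing ∑ c
  obtain ⟨S, hSmem, hmax⟩ := Finset.exists_max_image (I.powersetCard r)
    (fun S => ∑ s ∈ S, c s) ((Finset.powersetCard_nonempty).2 hIr.le)
  obtain ⟨hSsub, hScard⟩ := Finset.mem_powersetCard.1 hSmem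
  -- exchange: everything outside S has c-value ≤ everything inside S
  have hex : ∀ s ∈ I \ S, ∀ u ∈ S, c s ≤ c u := by
    intro s hs u hu
    by_contra hlt
    push_neg at hlt
    have hsI : s ∈ I := (Finset.mem_sdiff.1 hs).1
    have hsS : s ∉ S := (Finset.mem_sdiff.1 hs).2
    have h1 : insert s (S.erase u) ∈ I.powersetCard r := by
      refine Finset.mem_powersetCard.2 ⟨?_, ?_⟩
      · intro x hx
        rcases Finset.mem_insert.1 hx with rfl | hx
        · exact hsI
        · exact hSsub (Finset.mem_of_mem_erase hx)
      · rw [Finset.card_insert_of_notMem (fun h => hsS (Finset.mem_of_mem_erase h)),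
          Finset.card_erase_of_mem hu, hScard]
        omega
    have h2 := hmax _ h1
    rw [Finset.sum_insert (fun h => hsS (Finset.mem_of_mem_erase h))] at h2
    have h3 : ∑ x ∈ S, c x = c u + ∑ x ∈ S.erase u, c x :=
      (Finset.add_sum_erase _ _ hu).symm
    omega
  obtain ⟨u0, hu0, hmin⟩ := Finset.exists_min_image S c
    (Finset.card_pos.1 (by omega))
  set Q : ℚ := (c u0 : ℚ) with hQ
  have hQ0 : 0 ≤ Q := by positivity
  refine ⟨S, hSsub, hScard.le, ?_⟩
  have hcast : ((∑ s ∈ I, n s : ℕ) : ℚ) ≤ ((∑ s ∈ S, c s : ℕ) : ℚ) := by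
    push_cast
    have hsplit : ∑ s ∈ I, (n s : ℚ) = ∑ s ∈ S, (n s:ℚ) + ∑ s ∈ I \ S, (n s:ℚ) := by
      rw [add_comm, Finset.sum_sdiff hSsub]
    have hstep1 : ∑ s ∈ I \ S, (n s:ℚ) ≤ Q * ∑ s ∈ I \ S, (n s:ℚ)/c s := by
      rw [Finset.mul_sum]
      refine Finset.sum_le_sum fun s hs => ?_
      have hsI : s ∈ I := (Finset.mem_sdiff.1 hs).1
      have hcs : (0:ℚ) < c s := by exact_mod_cast hc s hsI
      have hcQ : (c s:ℚ) ≤ Q := by rw [hQ]; exact_mod_cast hex s hs u0 hu0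
      calc (n s:ℚ) = c s * ((n s:ℚ)/c s) := by field_simp
        _ ≤ Q * ((n s:ℚ)/c s) :=
            mul_le_mul_of_nonneg_right hcQ (div_nonneg (Nat.cast_nonneg _) hcs.le)
    have hstep2 : ∑ s ∈ I \ S, (n s:ℚ)/c s ≤ r - ∑ s ∈ S, (n s:ℚ)/c s := by
      have : ∑ s ∈ S, (n s:ℚ)/c s + ∑ s ∈ I \ S, (n s:ℚ)/c s = ∑ s ∈ I, (n s:ℚ)/c s := by
        rw [add_comm, Finset.sum_sdiff hSsub]
      linarith
    have hstep3 : ∑ s ∈ S, ((n s:ℚ) - Q * ((n s:ℚ)/c s)) ≤ ∑ s ∈ S, ((c s : ℚ) - Q) := by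
      refine Finset.sum_le_sum fun s hs => ?_
      have hcs : (0:ℚ) < c s := by exact_mod_cast hc s (hSsub hs)
      have h1 : (n s:ℚ) - Q * ((n s:ℚ)/c s) = ((n s:ℚ)/c s) * ((c s:ℚ) - Q) := by
        field_simp
      have h2 : (n s:ℚ)/c s ≤ 1 := by
        rw [div_le_one hcs]; exact_mod_cast hn s (hSsub hs)
      have h3 : (0:ℚ) ≤ (c s:ℚ) - Q := by
        rw [hQ]
        have : ((c u0:ℚ)) ≤ c s := by exact_mod_cast hmin s hs
        linarith
      rw [h1]
      nlinarith [div_nonneg (by positivity : (0:ℚ) ≤ (n s:ℚ)) hcs.le]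
    have hsum3 : ∑ s ∈ S, ((c s : ℚ) - Q) = ∑ s ∈ S, (c s:ℚ) - Q * r := by
      rw [Finset.sum_sub_distrib, Finset.sum_const, hScard, nsmul_eq_mul, mul_comm]
    have hSQ : ∑ s ∈ S, ((n s:ℚ) - Q * ((n s:ℚ)/c s))
        = ∑ s ∈ S, (n s:ℚ) - Q * ∑ s ∈ S, (n s:ℚ)/c s := by
      rw [Finset.sum_sub_distrib, Finset.mul_sum]
    nlinarith [mul_le_mul_of_nonneg_left hstep2 hQ0]
  exact_mod_cast hcast

lemma signsum {β : Type*} [Fintype β] (g : β → ℤ) (x : β → Bool) :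
    (∑ i ∈ Finset.univ.filter (fun i => x i = true), 2 * g i) - ∑ i, g i
      = ∑ i, g i * signVal (x i) := by
  classical
  rw [Finset.sum_filter, ← Finset.sum_sub_distrib]
  refine Finset.sum_congr rfl fun i _ => ?_
  cases hx : x i <;> simp [signVal] <;> ring


/-- if `λ` has `k ≥ 3` parts, not all equal, then `|λ^{⊥B}|` is at most
the sum of the four largest binomial coefficients of `k - 2`. -/
theorem stmt6 {k : ℕ} (hk : 3 ≤ k) (lam : Fin k → ℤ) (hpart : IsPartition lam)
    (hne : ∃ i j, lam i ≠ lam j) :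
    (perpB lam).card ≤ sumTop4 (k - 2) := by
  classical
  obtain ⟨_, hpos⟩ := hpart
  obtain ⟨a, b, hab⟩ := hne
  have hne' : a ≠ b := fun h => hab (by rw [h])
  have hfilter : (Finset.univ.filter fun i : Fin k => i ≠ a ∧ i ≠ b)
      = Finset.univ \ {a, b} := by
    ext i; simp [not_or]
  have hM : Fintype.card {i : Fin k // i ≠ a ∧ i ≠ b} = k - 2 := by
    rw [Fintype.card_subtype, hfilter, Finset.card_sdiff_of_subset (Finset.subset_univ _),
      Finset.card_insert_of_notMem (by simp [hne']), Finset.card_singleton,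
      Finset.card_fin]
  set M := Fintype.card {i : Fin k // i ≠ a ∧ i ≠ b} with hMdef
  set T : Finset ℤ := {lam a + lam b, lam a - lam b, lam b - lam a, -lam a - lam b} with hT
  have hT4 : T.card ≤ 4 := by
    refine le_trans (Finset.card_insert_le _ _) (Nat.succ_le_succ ?_)
    refine le_trans (Finset.card_insert_le _ _) (Nat.succ_le_succ ?_)
    exact le_trans (Finset.card_insert_le _ _) (Nat.succ_le_succ (Finset.card_singleton _).le)
  set L : ℤ := ∑ i : {i : Fin k // i ≠ a ∧ i ≠ b}, lam i.1 with hL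
  set 𝒜 : ℤ → Finset (Finset {i : Fin k // i ≠ a ∧ i ≠ b}) := fun t =>
    Finset.univ.filter fun Z => (∑ i ∈ Z, 2 * lam i.1) - L = t with h𝒜
  set F : Finset (Finset {i : Fin k // i ≠ a ∧ i ≠ b}) :=
    Finset.univ.filter (fun Z => (∑ i ∈ Z, 2 * lam i.1) - L ∈ T) with hF
  -- splitting a sum over Fin k
  have hsplit : ∀ G : Fin k → ℤ,
      ∑ i, G i = G a + G b + ∑ i : {i : Fin k // i ≠ a ∧ i ≠ b}, G i.1 := by
    intro G
    rw [← Finset.sum_filter_add_sum_filter_not Finset.univ (fun i => i ≠ a ∧ i ≠ b) G]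
    have h2 : (Finset.univ.filter fun i : Fin k => ¬(i ≠ a ∧ i ≠ b)) = {a, b} := by
      ext i
      simp [not_and_or, or_comm]
      tauto
    rw [h2, Finset.sum_pair hne',
      Finset.sum_subtype (p := fun i : Fin k => i ≠ a ∧ i ≠ b)
        (Finset.univ.filter fun i : Fin k => i ≠ a ∧ i ≠ b) (by simp) (fun i => G i)]
    ring
  set f : (Fin k → Bool) → Finset {i : Fin k // i ≠ a ∧ i ≠ b} := fun x =>
    Finset.univ.filter (fun i => x i.1 = true) with hfdef
  have hkey : ∀ x ∈ perpB lam,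
      lam a * signVal (x a) + lam b * signVal (x b)
        + ((∑ i ∈ f x, 2 * lam i.1) - L) = 0 := by
    intro x hx
    have hx0 : ∑ i, lam i * signVal (x i) = 0 := (Finset.mem_filter.1 hx).2
    have h1 := hsplit (fun i => lam i * signVal (x i))
    have h2 := signsum (fun i : {i : Fin k // i ≠ a ∧ i ≠ b} => lam i.1)
      (fun i : {i : Fin k // i ≠ a ∧ i ≠ b} => x i.1)
    simp only [hfdef, hL]
    rw [h2]
    omega
  have hmem : ∀ x ∈ perpB lam, f x ∈ F := by
    intro x hx
    have h := hkey x hx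
    have hA := hpos a; have hB := hpos b
    refine Finset.mem_filter.2 ⟨Finset.mem_univ _, ?_⟩
    simp only [hT, Finset.mem_insert, Finset.mem_singleton]
    revert h
    generalize (∑ i ∈ f x, 2 * lam ↑i) - L = R
    intro h
    cases h1 : x a <;> cases h2 : x b <;> simp [h1, h2, signVal] at h <;> omega
  have hinj : Set.InjOn f (perpB lam) := by
    intro x hx y hy hfxy
    have hcoords : ∀ i : {i : Fin k // i ≠ a ∧ i ≠ b}, x i.1 = y i.1 := by
      intro i
      have := Finset.ext_iff.1 hfxy i
      simp only [hfdef, Finset.mem_filter, Finset.mem_univ, true_and] at this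
      cases hxv : x i.1 <;> cases hyv : y i.1 <;> simp [hxv, hyv] at this ⊢
    have hRxy : (∑ i ∈ f x, 2 * lam i.1) = ∑ i ∈ f y, 2 * lam i.1 := by rw [hfxy]
    have h1 := hkey x hx
    have h2 := hkey y hy
    have heq : lam a * signVal (x a) + lam b * signVal (x b)
        = lam a * signVal (y a) + lam b * signVal (y b) := by omega
    have hA := hpos a; have hB := hpos b
    have hsx : x a = y a ∧ x b = y b := by
      cases e1 : x a <;> cases e2 : x b <;> cases e3 : y a <;> cases e4 : y b <;>
        simp only [e1, e2, e3, e4, signVal, if_true, if_false, Bool.false_eq_true, and_self,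
          reduceIte] at heq ⊢ <;> omega
    funext i
    by_cases hia : i = a
    · rw [hia]; exact hsx.1
    by_cases hib : i = b
    · rw [hib]; exact hsx.2
    exact hcoords ⟨i, hia, hib⟩
  have hcard1 : (perpB lam).card ≤ F.card :=
    Finset.card_le_card_of_injOn f hmem hinj
  -- antichains
  have hanti : ∀ t : ℤ, IsAntichain (· ⊆ ·)
      (↑(𝒜 t) : Set (Finset {i : Fin k // i ≠ a ∧ i ≠ b})) := by
    intro t Z hZ Z' hZ' hne2 hsub
    simp only [h𝒜, Finset.coe_filter, Set.mem_setOf_eq, Finset.mem_univ, true_and]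
      at hZ hZ'
    obtain ⟨u, huZ', huZ⟩ := Finset.exists_of_ssubset (lt_of_le_of_ne hsub hne2)
    have hlt : (∑ i ∈ Z, 2 * lam i.1) < ∑ i ∈ Z', 2 * lam i.1 := by
      refine Finset.sum_lt_sum_of_subset hsub huZ' huZ ?_ ?_
      · have := hpos u.1; omega
      · intro j _ _; have := hpos j.1; omega
    omega
  -- slice bounds
  have hchoosepos : ∀ s ∈ Finset.range (M + 1), 0 < M.choose s := by
    intro s hs
    exact Nat.choose_pos (Nat.lt_succ_iff.1 (Finset.mem_range.1 hs))
  have hn : ∀ s ∈ Finset.range (M + 1), (F.slice s).card ≤ M.choose s := by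
    intro s _
    have hsub : F.slice s ⊆ Finset.univ.powersetCard s := by
      intro Z hZ
      rw [Finset.mem_powersetCard_univ]
      exact (Finset.mem_slice.1 hZ).2
    calc (F.slice s).card ≤ (Finset.univ.powersetCard s).card := Finset.card_le_card hsub
      _ = M.choose s := by rw [Finset.card_powersetCard, Finset.card_univ]
  have hslice_sub : ∀ s, F.slice s ⊆ T.biUnion (fun t => (𝒜 t).slice s) := by
    intro s Z hZ
    obtain ⟨hZF, hZs⟩ := Finset.mem_slice.1 hZ
    have := (Finset.mem_filter.1 hZF).2
    exact Finset.mem_biUnion.2 ⟨_, this, Finset.mem_slice.2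
      ⟨Finset.mem_filter.2 ⟨Finset.mem_univ _, rfl⟩, hZs⟩⟩
  have hfrac : ∑ s ∈ Finset.range (M + 1), ((F.slice s).card : ℚ) / M.choose s ≤ 4 := by
    have step1 : ∀ s ∈ Finset.range (M + 1),
        ((F.slice s).card : ℚ) / M.choose s
          ≤ ∑ t ∈ T, (((𝒜 t).slice s).card : ℚ) / M.choose s := by
      intro s hs
      rw [← Finset.sum_div]
      have hnum : (F.slice s).card ≤ ∑ t ∈ T, ((𝒜 t).slice s).card :=
        le_trans (Finset.card_le_card (hslice_sub s)) Finset.card_biUnion_le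
      have hc : (0:ℚ) < M.choose s := by exact_mod_cast hchoosepos s hs
      gcongr
      exact_mod_cast hnum
    calc ∑ s ∈ Finset.range (M+1), ((F.slice s).card : ℚ) / M.choose s
        ≤ ∑ s ∈ Finset.range (M+1), ∑ t ∈ T, (((𝒜 t).slice s).card : ℚ) / M.choose s :=
          Finset.sum_le_sum step1
      _ = ∑ t ∈ T, ∑ s ∈ Finset.range (M+1), (((𝒜 t).slice s).card : ℚ) / M.choose s :=
          Finset.sum_comm
      _ ≤ ∑ t ∈ T, 1 := by
          refine Finset.sum_le_sum fun t _ => ?_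
          rw [hMdef]
          exact Finset.sum_card_slice_div_choose_le_one (𝕜 := ℚ) (hanti t)
      _ = T.card := by simp
      _ ≤ 4 := by exact_mod_cast hT4
  obtain ⟨S, hSsub, hScard, hle⟩ := knap (Finset.range (M+1)) (fun s => M.choose s)
    (fun s => (F.slice s).card) 4 hchoosepos hn hfrac
  have hFcard : ∑ s ∈ Finset.range (M+1), (F.slice s).card = F.card := by
    have hr : Finset.range (M+1) = Finset.Iic M := by ext s; simp [Nat.lt_succ_iff]
    rw [hr, hMdef, Finset.sum_card_slice]
  have hfinal : F.card ≤ sumTop4 M := by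
    rw [← hFcard]
    refine hle.trans ?_
    exact Finset.le_sup (f := fun S => ∑ j ∈ S, Nat.choose M j)
      (Finset.mem_filter.2 ⟨Finset.mem_powerset.2 hSsub, hScard⟩)
  rw [← hM]
  exact hcard1.trans hfinal

end P2834
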